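/- Under the assumptions of the previous statement (T invertible, V_m = E[(T(y)_m − T̄_m)(X − K)], D = K + Σ_m t_m V_m with t = T^{-1}(T(y) − T̄)), the minimum value of the mean-squared error satisfies E‖D − X‖_F² = E‖X − K‖_F² − Σ_{m,m'} [T^{-1}]_{m,m'} tr(V_m^H V_{m'}). -/

import Mathlib

open MeasureTheory ProbabilityTheory Matrix
open scoped NNReal

noncomputable def frobSq {N : ℕ} (A : Matrix (Fin N) (Fin N) ℂ) : ℝ :=
  ∑ i, ∑ j, ‖A i j‖ ^ 2

section Aux

open Complex

variable {Ω : Type*} [MeasureSpace Ω] [IsProbabilityMeasure (ℙ : Measure Ω)]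

lemma mulIntR {f g : Ω → ℝ} (hf : MemLp f 2 ℙ) (hg : MemLp g 2 ℙ) :
    Integrable (fun ω => f ω * g ω) ℙ := by
  have h : MemLp (f • g) 1 ℙ := hg.smul hf
  rw [memLp_one_iff_integrable] at h
  exact h

lemma mulIntC {f g : Ω → ℂ} (hf : MemLp f 2 ℙ) (hg : MemLp g 2 ℙ) :
    Integrable (fun ω => f ω * g ω) ℙ := by
  have h : MemLp (f • g) 1 ℙ := hg.smul hf
  rw [memLp_one_iff_integrable] at h
  exact h

lemma sqNormInt {f : Ω → ℂ} (hf : MemLp f 2 ℙ) :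
    Integrable (fun ω => ‖f ω‖ ^ 2) ℙ :=
  (memLp_two_iff_integrable_sq_norm hf.1).mp hf

lemma keyMSE {M : ℕ} (c : Fin M → Ω → ℝ) (hc : ∀ m, MemLp (c m) 2 ℙ)
    (z : Ω → ℂ) (hz : MemLp z 2 ℙ) (v : Fin M → ℂ) (Q : Matrix (Fin M) (Fin M) ℝ)
    (hQ : ∀ m k, ∫ ω, c m ω * c k ω ∂ℙ = Q m k)
    (hcz : ∀ m, ∫ ω, (c m ω : ℂ) * z ω ∂ℙ = ∑ k, (Q m k : ℂ) * v k) :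
    ∫ ω, ‖(∑ m, (c m ω : ℂ) * v m) - z ω‖ ^ 2 ∂ℙ
      = (∫ ω, ‖z ω‖ ^ 2 ∂ℙ)
        - ∑ m, ∑ k, Q m k * (v m * (starRingEnd ℂ) (v k)).re := by
  have hnormsq : ∀ w : ℂ, ‖w‖ ^ 2 = Complex.normSq w := fun w => by
    rw [← Complex.sq_norm]
  -- pointwise expansion
  have hpt : ∀ ω, ‖(∑ m, (c m ω : ℂ) * v m) - z ω‖ ^ 2
      = (∑ m, ∑ k, c m ω * c k ω * (v m * (starRingEnd ℂ) (v k)).re) + ‖z ω‖ ^ 2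
        - 2 * ∑ m, c m ω * (v m * (starRingEnd ℂ) (z ω)).re := by
    intro ω
    set A := ∑ m, (c m ω : ℂ) * v m with hAdef
    have hconjA : (starRingEnd ℂ) A = ∑ k, (c k ω : ℂ) * (starRingEnd ℂ) (v k) := by
      rw [hAdef, map_sum]
      exact Finset.sum_congr rfl fun k _ => by rw [_root_.map_mul, Complex.conj_ofReal]
    have h1 : Complex.normSq A
        = ∑ m, ∑ k, c m ω * c k ω * (v m * (starRingEnd ℂ) (v k)).re := by
      have h3 : Complex.normSq A = (A * (starRingEnd ℂ) A).re := by
        rw [Complex.mul_conj, Complex.ofReal_re]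
      rw [h3, hconjA, hAdef, Finset.sum_mul_sum, Complex.re_sum]
      refine Finset.sum_congr rfl fun m _ => ?_
      rw [Complex.re_sum]
      refine Finset.sum_congr rfl fun k _ => ?_
      have he : (c m ω : ℂ) * v m * ((c k ω : ℂ) * (starRingEnd ℂ) (v k))
          = ((c m ω * c k ω : ℝ) : ℂ) * (v m * (starRingEnd ℂ) (v k)) := by
        push_cast; ring
      rw [he, Complex.re_ofReal_mul]
    have h4 : (A * (starRingEnd ℂ) (z ω)).re
        = ∑ m, c m ω * (v m * (starRingEnd ℂ) (z ω)).re := by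
      rw [hAdef, Finset.sum_mul, Complex.re_sum]
      refine Finset.sum_congr rfl fun m _ => ?_
      rw [mul_assoc, Complex.re_ofReal_mul]
    rw [hnormsq, hnormsq, Complex.normSq_sub, h1, h4]
  -- integrability facts
  have hcc : ∀ m k, Integrable (fun ω => c m ω * c k ω) ℙ :=
    fun m k => mulIntR (hc m) (hc k)
  have hzc : MemLp (fun ω => (starRingEnd ℂ) (z ω)) 2 ℙ :=
    hz.of_le (RCLike.continuous_conj.comp_aestronglyMeasurable hz.1)
      (Filter.Eventually.of_forall fun ω => by simp)
  have hczc : ∀ m, Integrable (fun ω => (c m ω : ℂ) * (starRingEnd ℂ) (z ω)) ℙ :=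
    fun m => mulIntC (hc m).ofReal hzc
  have hmixC : ∀ m, Integrable (fun ω => (c m ω : ℂ) * (v m * (starRingEnd ℂ) (z ω))) ℙ := by
    intro m
    have h := (hczc m).const_mul (v m)
    have e : (fun ω => v m * ((c m ω : ℂ) * (starRingEnd ℂ) (z ω)))
        = fun ω => (c m ω : ℂ) * (v m * (starRingEnd ℂ) (z ω)) := by
      funext ω; ring
    rwa [e] at h
  have hS2term : ∀ m, Integrable (fun ω => c m ω * (v m * (starRingEnd ℂ) (z ω)).re) ℙ := by
    intro m
    have h2 : Integrable (fun ω => ((c m ω : ℂ) * (v m * (starRingEnd ℂ) (z ω))).re) ℙ := by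
      simpa using (hmixC m).re
    have e2 : (fun ω => c m ω * (v m * (starRingEnd ℂ) (z ω)).re)
        = fun ω => ((c m ω : ℂ) * (v m * (starRingEnd ℂ) (z ω))).re := by
      funext ω; rw [Complex.re_ofReal_mul]
    rwa [e2]
  have hS1 : Integrable
      (fun ω => ∑ m, ∑ k, c m ω * c k ω * (v m * (starRingEnd ℂ) (v k)).re) ℙ :=
    integrable_finset_sum _ fun m _ =>
      integrable_finset_sum _ fun k _ => (hcc m k).mul_const _
  have hS2 : Integrable (fun ω => ∑ m, c m ω * (v m * (starRingEnd ℂ) (z ω)).re) ℙ :=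
    integrable_finset_sum _ fun m _ => hS2term m
  -- integral values
  have hI1 : ∫ ω, (∑ m, ∑ k, c m ω * c k ω * (v m * (starRingEnd ℂ) (v k)).re) ∂ℙ
      = ∑ m, ∑ k, Q m k * (v m * (starRingEnd ℂ) (v k)).re := by
    rw [integral_finset_sum _ fun m _ =>
      integrable_finset_sum _ fun k _ => (hcc m k).mul_const _]
    refine Finset.sum_congr rfl fun m _ => ?_
    rw [integral_finset_sum _ fun k _ => (hcc m k).mul_const _]
    refine Finset.sum_congr rfl fun k _ => ?_
    rw [integral_mul_const, hQ]
  have hI2' : ∀ m, ∫ ω, (c m ω : ℂ) * (starRingEnd ℂ) (z ω) ∂ℙ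
      = ∑ k, (Q m k : ℂ) * (starRingEnd ℂ) (v k) := by
    intro m
    have e : (fun ω => (c m ω : ℂ) * (starRingEnd ℂ) (z ω))
        = fun ω => (starRingEnd ℂ) ((c m ω : ℂ) * z ω) := by
      funext ω; rw [_root_.map_mul, Complex.conj_ofReal]
    rw [e, integral_conj, hcz m, map_sum]
    refine Finset.sum_congr rfl fun k _ => ?_
    rw [_root_.map_mul, Complex.conj_ofReal]
  have hI2 : ∀ m, ∫ ω, c m ω * (v m * (starRingEnd ℂ) (z ω)).re ∂ℙ
      = ∑ k, Q m k * (v m * (starRingEnd ℂ) (v k)).re := by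
    intro m
    have e2 : (fun ω => c m ω * (v m * (starRingEnd ℂ) (z ω)).re)
        = fun ω => ((c m ω : ℂ) * (v m * (starRingEnd ℂ) (z ω))).re := by
      funext ω; rw [Complex.re_ofReal_mul]
    rw [e2]
    have hre := integral_re (hmixC m)
    simp only [RCLike.re_to_complex] at hre
    rw [hre]
    have e3 : (fun ω => (c m ω : ℂ) * (v m * (starRingEnd ℂ) (z ω)))
        = fun ω => v m * ((c m ω : ℂ) * (starRingEnd ℂ) (z ω)) := by
      funext ω; ring
    rw [e3, integral_const_mul, hI2' m, Finset.mul_sum, Complex.re_sum]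
    refine Finset.sum_congr rfl fun k _ => ?_
    have e4 : v m * ((Q m k : ℂ) * (starRingEnd ℂ) (v k))
        = ((Q m k : ℝ) : ℂ) * (v m * (starRingEnd ℂ) (v k)) := by ring
    rw [e4, Complex.re_ofReal_mul]
  -- assemble
  have hadd : Integrable (fun ω =>
      (∑ m, ∑ k, c m ω * c k ω * (v m * (starRingEnd ℂ) (v k)).re) + ‖z ω‖ ^ 2) ℙ :=
    hS1.add (sqNormInt hz)
  have hmul : Integrable (fun ω =>
      2 * ∑ m, c m ω * (v m * (starRingEnd ℂ) (z ω)).re) ℙ := hS2.const_mul 2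
  rw [integral_congr_ae (Filter.Eventually.of_forall hpt)]
  rw [integral_sub hadd hmul,
    integral_add hS1 (sqNormInt hz), integral_const_mul, hI1,
    integral_finset_sum _ fun m _ => hS2term m]
  have hsum : (∑ m, ∫ ω, c m ω * (v m * (starRingEnd ℂ) (z ω)).re ∂ℙ)
      = ∑ m, ∑ k, Q m k * (v m * (starRingEnd ℂ) (v k)).re :=
    Finset.sum_congr rfl fun m _ => hI2 m
  rw [hsum]
  ring

lemma sum_swap4 {I J A B : Type*} [Fintype I] [Fintype J] [Fintype A] [Fintype B]
    (F : I → J → A → B → ℝ) :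
    ∑ i, ∑ j, ∑ a, ∑ b, F i j a b = ∑ a, ∑ b, ∑ i, ∑ j, F i j a b := by
  rw [show (∑ i, ∑ j, ∑ a, ∑ b, F i j a b) = ∑ i, ∑ a, ∑ j, ∑ b, F i j a b from
    Finset.sum_congr rfl fun i _ => Finset.sum_comm]
  rw [Finset.sum_comm]
  refine Finset.sum_congr rfl fun a _ => ?_
  rw [show (∑ i, ∑ j, ∑ b, F i j a b) = ∑ i, ∑ b, ∑ j, F i j a b from
    Finset.sum_congr rfl fun i _ => Finset.sum_comm]
  exact Finset.sum_comm

end Aux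

/-- The spectral MSE of the linear spectral estimator
`D = K + Σ_m t_m V_m`, `t = T⁻¹(T(y) − T̄)`, equals
`E‖X − K‖_F² − Σ_{m,m'} [T⁻¹]_{m,m'} tr(V_mᴴ V_{m'})`. -/
theorem stmt16 {Ω : Type*} [MeasureSpace Ω] [IsProbabilityMeasure (ℙ : Measure Ω)]
    {M N : ℕ} (Ty : Ω → Fin M → ℝ) (X : Ω → Matrix (Fin N) (Fin N) ℂ)
    (hHerm : ∀ ω, (X ω).IsHermitian)
    (hTy : ∀ m, MemLp (fun ω => Ty ω m) 2 ℙ)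
    (hX : ∀ i j, MemLp (fun ω => X ω i j) 2 ℙ)
    (Tbar : Fin M → ℝ) (hTbar : ∀ m, Tbar m = ∫ ω, Ty ω m ∂ℙ)
    (Tmat : Matrix (Fin M) (Fin M) ℝ)
    (hTmat : ∀ m m', Tmat m m' = ∫ ω, (Ty ω m - Tbar m) * (Ty ω m' - Tbar m') ∂ℙ)
    (hTunit : IsUnit Tmat.det)
    (K : Matrix (Fin N) (Fin N) ℂ) (hK : ∀ i j, K i j = ∫ ω, X ω i j ∂ℙ)
    (V : Fin M → Matrix (Fin N) (Fin N) ℂ)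
    (hV : ∀ m i j, V m i j = ∫ ω, ((Ty ω m - Tbar m : ℝ) : ℂ) * (X ω i j - K i j) ∂ℙ) :
    ∫ ω, frobSq (K + (∑ m, ((Tmat⁻¹ *ᵥ (Ty ω - Tbar)) m) • V m) - X ω) ∂ℙ
      = (∫ ω, frobSq (X ω - K) ∂ℙ)
        - ∑ m, ∑ m', Tmat⁻¹ m m' * (Matrix.trace ((V m)ᴴ * V m')).re := by
  classical
  -- centered observables
  have hsmem : ∀ m, MemLp (fun ω => Ty ω m - Tbar m) 2 ℙ :=
    fun m => (hTy m).sub (memLp_const _)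
  have hss : ∀ a b, Integrable (fun ω => (Ty ω a - Tbar a) * (Ty ω b - Tbar b)) ℙ :=
    fun a b => mulIntR (hsmem a) (hsmem b)
  -- coefficients
  set c : Fin M → Ω → ℝ := fun m ω => ((Tmat⁻¹) *ᵥ (Ty ω - Tbar)) m with hcdef
  have hcval : ∀ m ω, c m ω = ∑ k, (Tmat⁻¹) m k * (Ty ω k - Tbar k) := by
    intro m ω
    simp [hcdef, Matrix.mulVec, dotProduct]
  have hcmem : ∀ m, MemLp (c m) 2 ℙ := by
    intro m
    have h1 : MemLp (fun ω => ∑ k, (Tmat⁻¹) m k * (Ty ω k - Tbar k)) 2 ℙ :=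
      memLp_finset_sum _ fun k _ => (hsmem k).const_mul _
    have h2 : c m = fun ω => ∑ k, (Tmat⁻¹) m k * (Ty ω k - Tbar k) := funext fun ω => hcval m ω
    rwa [h2]
  -- symmetry of Tmat and (Tmat⁻¹)
  have hTsym : Tmatᵀ = Tmat := by
    ext a b
    rw [Matrix.transpose_apply, hTmat, hTmat]
    exact integral_congr_ae (Filter.Eventually.of_forall fun ω => mul_comm _ _)
  have hTisym : ∀ a b, (Tmat⁻¹) a b = (Tmat⁻¹) b a := by
    intro a b
    have h : Tmat⁻¹ᵀ = Tmat⁻¹ := by rw [Matrix.transpose_nonsing_inv, hTsym]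
    exact congrFun (congrFun h b) a
  have hinv : (Tmat⁻¹) * Tmat = 1 := Matrix.nonsing_inv_mul Tmat hTunit
  -- second moments of the coefficients
  have hQ : ∀ m k, ∫ ω, c m ω * c k ω ∂ℙ = (Tmat⁻¹) m k := by
    intro m k
    have e : (fun ω => c m ω * c k ω)
        = fun ω => ∑ a, ∑ b, (Tmat⁻¹) m a * (Tmat⁻¹) k b * ((Ty ω a - Tbar a) * (Ty ω b - Tbar b)) := by
      funext ω
      rw [hcval, hcval, Finset.sum_mul_sum]
      exact Finset.sum_congr rfl fun a _ => Finset.sum_congr rfl fun b _ => by ring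
    rw [e, integral_finset_sum _ fun a _ =>
      integrable_finset_sum _ fun b _ => (hss a b).const_mul _]
    have e2 : ∀ a, ∫ ω, (∑ b, (Tmat⁻¹) m a * (Tmat⁻¹) k b * ((Ty ω a - Tbar a) * (Ty ω b - Tbar b))) ∂ℙ
        = ∑ b, (Tmat⁻¹) m a * (Tmat⁻¹) k b * Tmat a b := by
      intro a
      rw [integral_finset_sum _ fun b _ => (hss a b).const_mul _]
      refine Finset.sum_congr rfl fun b _ => ?_
      rw [integral_const_mul, ← hTmat]
    rw [Finset.sum_congr rfl fun a _ => e2 a]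
    have e3 : ∑ a, ∑ b, (Tmat⁻¹) m a * (Tmat⁻¹) k b * Tmat a b
        = ∑ b, (Tmat⁻¹) k b * (((Tmat⁻¹) * Tmat) m b) := by
      rw [Finset.sum_comm]
      refine Finset.sum_congr rfl fun b _ => ?_
      rw [Matrix.mul_apply, Finset.mul_sum]
      exact Finset.sum_congr rfl fun a _ => by ring
    rw [e3, hinv]
    simp [Matrix.one_apply, hTisym m k]
  -- covariance with the matrix entries
  have hZmem : ∀ i j, MemLp (fun ω => X ω i j - K i j) 2 ℙ :=
    fun i j => (hX i j).sub (memLp_const _)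
  have hcz : ∀ (i j : Fin N) m, ∫ ω, (c m ω : ℂ) * (X ω i j - K i j) ∂ℙ
      = ∑ k, (((Tmat⁻¹) m k : ℝ) : ℂ) * V k i j := by
    intro i j m
    have e : (fun ω => (c m ω : ℂ) * (X ω i j - K i j))
        = fun ω => ∑ k, (((Tmat⁻¹) m k : ℝ) : ℂ)
            * (((Ty ω k - Tbar k : ℝ) : ℂ) * (X ω i j - K i j)) := by
      funext ω
      rw [hcval]
      push_cast
      rw [Finset.sum_mul]
      exact Finset.sum_congr rfl fun k _ => by ring
    have hsC : ∀ k : Fin M, MemLp (fun ω => ((Ty ω k - Tbar k : ℝ) : ℂ)) 2 ℙ :=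
      fun k => (hsmem k).ofReal
    rw [e, integral_finset_sum _ fun k _ =>
      (mulIntC (hsC k) (hZmem i j)).const_mul (((Tmat⁻¹) m k : ℝ) : ℂ)]
    refine Finset.sum_congr rfl fun k _ => ?_
    rw [integral_const_mul, ← hV]
  -- the key scalar identity, entrywise
  have keyapp : ∀ i j, ∫ ω, ‖(∑ m, (c m ω : ℂ) * V m i j) - (X ω i j - K i j)‖ ^ 2 ∂ℙ
      = (∫ ω, ‖X ω i j - K i j‖ ^ 2 ∂ℙ)
        - ∑ m, ∑ k, (Tmat⁻¹) m k * (V m i j * (starRingEnd ℂ) (V k i j)).re :=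
    fun i j => keyMSE c hcmem (fun ω => X ω i j - K i j) (hZmem i j)
      (fun m => V m i j) (Tmat⁻¹) hQ (hcz i j)
  -- entry formula for the estimator error
  have hentry : ∀ ω (i j : Fin N),
      (K + (∑ m, ((Tmat⁻¹ *ᵥ (Ty ω - Tbar)) m) • V m) - X ω) i j
        = (∑ m, (c m ω : ℂ) * V m i j) - (X ω i j - K i j) := by
    intro ω i j
    have : (K + (∑ m, ((Tmat⁻¹ *ᵥ (Ty ω - Tbar)) m) • V m) - X ω) i j
        = K i j + (∑ m, ((Tmat⁻¹ *ᵥ (Ty ω - Tbar)) m) • V m i j) - X ω i j := by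
      simp [Matrix.sub_apply, Matrix.add_apply, Matrix.sum_apply, Matrix.smul_apply]
    rw [this]
    have e : ∀ m : Fin M, ((Tmat⁻¹ *ᵥ (Ty ω - Tbar)) m) • V m i j
        = (c m ω : ℂ) * V m i j := by
      intro m
      rw [Complex.real_smul]
    rw [Finset.sum_congr rfl fun m _ => e m]
    ring
  -- membership / integrability of entry errors
  have hmem_entry : ∀ i j, MemLp
      (fun ω => (∑ m, (c m ω : ℂ) * V m i j) - (X ω i j - K i j)) 2 ℙ := by
    intro i j
    refine MemLp.sub ?_ (hZmem i j)
    refine memLp_finset_sum _ fun m _ => ?_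
    have hco : MemLp (fun ω => ((c m ω : ℝ) : ℂ)) 2 ℙ := (hcmem m).ofReal
    have h := hco.const_mul (V m i j)
    have e : (fun ω => V m i j * (c m ω : ℂ)) = fun ω => (c m ω : ℂ) * V m i j := by
      funext ω; ring
    rwa [e] at h
  have hint_entry : ∀ i j, Integrable
      (fun ω => ‖(∑ m, (c m ω : ℂ) * V m i j) - (X ω i j - K i j)‖ ^ 2) ℙ :=
    fun i j => sqNormInt (hmem_entry i j)
  -- LHS
  have hLfun : (fun ω => frobSq (K + (∑ m, ((Tmat⁻¹ *ᵥ (Ty ω - Tbar)) m) • V m) - X ω))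
      = fun ω => ∑ i, ∑ j,
          ‖(∑ m, (c m ω : ℂ) * V m i j) - (X ω i j - K i j)‖ ^ 2 := by
    funext ω
    simp only [frobSq]
    exact Finset.sum_congr rfl fun i _ => Finset.sum_congr rfl fun j _ => by
      rw [hentry ω i j]
  have hLHS : ∫ ω, frobSq (K + (∑ m, ((Tmat⁻¹ *ᵥ (Ty ω - Tbar)) m) • V m) - X ω) ∂ℙ
      = ∑ i, ∑ j, ((∫ ω, ‖X ω i j - K i j‖ ^ 2 ∂ℙ)
          - ∑ m, ∑ k, (Tmat⁻¹) m k * (V m i j * (starRingEnd ℂ) (V k i j)).re) := by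
    rw [integral_congr_ae (Filter.Eventually.of_forall fun ω => congrFun hLfun ω)]
    rw [integral_finset_sum _ fun i _ => integrable_finset_sum _ fun j _ => hint_entry i j]
    refine Finset.sum_congr rfl fun i _ => ?_
    rw [integral_finset_sum _ fun j _ => hint_entry i j]
    exact Finset.sum_congr rfl fun j _ => keyapp i j
  -- RHS first term
  have hRfun : (fun ω => frobSq (X ω - K))
      = fun ω => ∑ i, ∑ j, ‖X ω i j - K i j‖ ^ 2 := by
    funext ω
    simp [frobSq, Matrix.sub_apply]
  have hRHS1 : ∫ ω, frobSq (X ω - K) ∂ℙ = ∑ i, ∑ j, ∫ ω, ‖X ω i j - K i j‖ ^ 2 ∂ℙ := by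
    rw [integral_congr_ae (Filter.Eventually.of_forall fun ω => congrFun hRfun ω)]
    rw [integral_finset_sum _ fun i _ =>
      integrable_finset_sum _ fun j _ => sqNormInt (hZmem i j)]
    refine Finset.sum_congr rfl fun i _ => ?_
    rw [integral_finset_sum _ fun j _ => sqNormInt (hZmem i j)]
  -- trace identity
  have htr : ∀ m k, (Matrix.trace ((V m)ᴴ * V k)).re
      = ∑ i, ∑ j, (V m i j * (starRingEnd ℂ) (V k i j)).re := by
    intro m k
    have h1 : Matrix.trace ((V m)ᴴ * V k)
        = ∑ x, ∑ y, (starRingEnd ℂ) (V m y x) * V k y x := by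
      simp [Matrix.trace, Matrix.diag, Matrix.mul_apply, Matrix.conjTranspose_apply]
    rw [h1, Complex.re_sum]
    have h2 : ∀ x : Fin N, (∑ y, (starRingEnd ℂ) (V m y x) * V k y x).re
        = ∑ y, ((starRingEnd ℂ) (V m y x) * V k y x).re := fun x => Complex.re_sum _ _
    rw [Finset.sum_congr rfl fun x _ => h2 x, Finset.sum_comm]
    refine Finset.sum_congr rfl fun i _ => Finset.sum_congr rfl fun j _ => ?_
    simp [Complex.mul_re]
  -- final assembly
  rw [hLHS, hRHS1]
  have h3 : ∀ m k, Tmat⁻¹ m k * (Matrix.trace ((V m)ᴴ * V k)).re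
      = ∑ i, ∑ j, Tmat⁻¹ m k * (V m i j * (starRingEnd ℂ) (V k i j)).re := by
    intro m k
    rw [htr m k, Finset.mul_sum]
    exact Finset.sum_congr rfl fun i _ => Finset.mul_sum _ _ _
  have h4 : (∑ m, ∑ m', Tmat⁻¹ m m' * (Matrix.trace ((V m)ᴴ * V m')).re)
      = ∑ m, ∑ m', ∑ i, ∑ j,
          Tmat⁻¹ m m' * (V m i j * (starRingEnd ℂ) (V m' i j)).re :=
    Finset.sum_congr rfl fun m _ => Finset.sum_congr rfl fun k _ => h3 m k
  rw [h4, Finset.sum_congr rfl fun (i : Fin N) _ => Finset.sum_sub_distrib _ _,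
    Finset.sum_sub_distrib]
  congr 1
  exact sum_swap4 _
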